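/- A directed acyclic graph is Markov equivalent to some bidirected graph if and only if it contains no unshielded non-collision V-configuration. -/

import Mathlib

/-- A loopless mixed graph with three kinds of edges: lines (undirected),
arrows (directed, `arrow i j` means `i → j`), and arcs (bidirected). -/
structure MixedGraph (V : Type*) where
  line : V → V → Prop
  arrow : V → V → Prop
  arc : V → V → Prop
  line_symm : ∀ i j, line i j → line j i
  arc_symm : ∀ i j, arc i j → arc j i
  line_irrefl : ∀ i, ¬ line i i
  arrow_irrefl : ∀ i, ¬ arrow i i
  arc_irrefl : ∀ i, ¬ arc i i

namespace MixedGraph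

variable {V : Type*}

/-- `i` and `j` are adjacent (joined by some edge). -/
def adj (G : MixedGraph V) (i j : V) : Prop :=
  G.line i j ∨ G.arrow i j ∨ G.arrow j i ∨ G.arc i j

/-- There is an edge between `i` and `j` with an arrowhead pointing at `j`. -/
def headAt (G : MixedGraph V) (i j : V) : Prop :=
  G.arrow i j ∨ G.arc i j

/-- `j` is a collider on the V-configuration `⟨i, j, k⟩`. -/
def collider (G : MixedGraph V) (i j k : V) : Prop :=
  G.headAt i j ∧ G.headAt k j

/-- `i` is an ancestor of `j` (a direction-preserving path of arrows from `i` to `j`). -/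
def anc (G : MixedGraph V) (i j : V) : Prop :=
  Relation.ReflTransGen G.arrow i j

/-- A path: a list of pairwise distinct nodes, consecutive ones adjacent. -/
def isPath (G : MixedGraph V) (p : List V) : Prop :=
  p.Nodup ∧ List.Chain' G.adj p

/-- Inner-node condition for an `m`-connecting path given `C`:
every collider inner node is in `C` or an ancestor of a node of `C`,
every non-collider inner node is outside `C`. -/
def innerOK (G : MixedGraph V) (C : Set V) : List V → Prop
  | a :: b :: c :: rest =>
      ((G.collider a b c → b ∈ C ∨ ∃ x ∈ C, G.anc b x) ∧
        (¬ G.collider a b c → b ∉ C)) ∧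
      innerOK G C (b :: c :: rest)
  | _ => True

/-- `p` is an `m`-connecting path between `i` and `j` given `C`. -/
def mConnecting (G : MixedGraph V) (C : Set V) (i j : V) (p : List V) : Prop :=
  G.isPath p ∧ 2 ≤ p.length ∧ p.head? = some i ∧ p.getLast? = some j ∧
    G.innerOK C p

/-- `A` is `m`-separated from `B` given `C`. -/
def mSep (G : MixedGraph V) (A B C : Set V) : Prop :=
  ¬ ∃ (i j : V) (p : List V), i ∈ A ∧ j ∈ B ∧ G.mConnecting C i j p

/-- Two mixed graphs on the same node set are Markov equivalent if they induce
exactly the same `m`-separation statements among disjoint sets. -/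
def markovEquiv (G₁ G₂ : MixedGraph V) : Prop :=
  ∀ A B C : Set V, Disjoint A B → Disjoint A C → Disjoint B C →
    (G₁.mSep A B C ↔ G₂.mSep A B C)

/-- An undirected graph: only line edges. -/
def isUG (G : MixedGraph V) : Prop :=
  (∀ i j, ¬ G.arrow i j) ∧ (∀ i j, ¬ G.arc i j)

/-- A bidirected graph: only arc edges. -/
def isBG (G : MixedGraph V) : Prop :=
  (∀ i j, ¬ G.arrow i j) ∧ (∀ i j, ¬ G.line i j)

/-- A directed acyclic graph: only arrows, and no directed cycle. -/
def isDAG (G : MixedGraph V) : Prop :=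
  (∀ i j, ¬ G.line i j) ∧ (∀ i j, ¬ G.arc i j) ∧ ∀ i, ¬ Relation.TransGen G.arrow i i

/-- An ancestral graph: no node is an ancestor of one of its parents or spouses,
and no arrowhead points at a node having a neighbour. -/
def isAncestral (G : MixedGraph V) : Prop :=
  (∀ i j, (G.arrow j i ∨ G.arc j i) → ¬ G.anc i j) ∧
  (∀ i j k, G.line i j → ¬ G.headAt k i)

/-- Maximality: every pair of distinct non-adjacent nodes can be `m`-separated. -/
def isMaximal (G : MixedGraph V) : Prop :=
  ∀ i j, i ≠ j → ¬ G.adj i j → ∃ C : Set V, i ∉ C ∧ j ∉ C ∧ G.mSep {i} {j} C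

/-- A maximal ancestral graph. -/
def isMAG (G : MixedGraph V) : Prop :=
  G.isAncestral ∧ G.isMaximal

/-- Two graphs have the same skeleton. -/
def sameSkeleton (G₁ G₂ : MixedGraph V) : Prop :=
  ∀ i j, G₁.adj i j ↔ G₂.adj i j

/-- An unshielded collider V-configuration `⟨i, j, k⟩`. -/
def unshieldedCollider (G : MixedGraph V) (i j k : V) : Prop :=
  G.collider i j k ∧ i ≠ k ∧ ¬ G.adj i k

end MixedGraph

namespace MixedGraph
variable {V : Type*}

/-- An unshielded non-collision V-configuration: a path `i, j, k` with `i, k`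
non-adjacent which is not of the form `i → j ← k`. -/
def unshieldedNonCollision (G : MixedGraph V) (i j k : V) : Prop :=
  G.adj i j ∧ G.adj j k ∧ i ≠ k ∧ ¬ G.adj i k ∧ ¬ (G.arrow i j ∧ G.arrow k j)

end MixedGraph

open List

namespace MagAux
variable {V : Type*}

lemma tail_dropLast (l : List V) : l.tail.dropLast = l.dropLast.tail := by
  cases l with
  | nil => simp
  | cons h t =>
    cases t with
    | nil => simp
    | cons b t' => simp [List.dropLast]

lemma inner_subset {l : List V} {x : V} (h : x ∈ l.tail.dropLast) : x ∈ l :=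
  List.tail_subset l (List.dropLast_subset _ h)

lemma mem_inner_of {l : List V} {x : V} (hx : x ∈ l) (hh : l.head? ≠ some x)
    (hl : l.getLast? ≠ some x) : x ∈ l.tail.dropLast := by
  cases l with
  | nil => simp at hx
  | cons h t =>
    simp only [List.head?_cons, ne_eq, Option.some.injEq] at hh
    have hxt : x ∈ t := by
      rcases List.mem_cons.mp hx with rfl | h'
      · exact absurd rfl (fun h => hh h.symm)
      · exact h'
    have ht : t ≠ [] := by rintro rfl; simp at hxt
    have hg : (h :: t).getLast? = some (t.getLast ht) := by
      rw [List.getLast?_eq_getLast (l := h :: t) (by simp), List.getLast_cons ht]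
    rw [hg] at hl
    have : x ≠ t.getLast ht := fun h' => hl (by rw [h'])
    have := List.dropLast_append_getLast ht
    simp only [List.tail_cons]
    rcases List.mem_append.mp (by rw [this]; exact hxt) with h' | h'
    · exact h'
    · simp at h'; exact absurd h' ‹x ≠ t.getLast ht›

lemma not_head_of_inner {l : List V} {x : V} (hn : l.Nodup) (h : x ∈ l.tail.dropLast) :
    l.head? ≠ some x := by
  cases l with
  | nil => simp
  | cons a t =>
    simp only [List.head?_cons, ne_eq, Option.some.injEq]
    rintro rfl
    exact (List.nodup_cons.mp hn).1 (List.dropLast_subset _ h)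

lemma not_last_of_inner {l : List V} {x : V} (hn : l.Nodup) (h : x ∈ l.tail.dropLast) :
    l.getLast? ≠ some x := by
  cases l with
  | nil => simp
  | cons a t =>
    cases t with
    | nil => simp at h
    | cons b t' =>
      set t := b :: t' with ht
      have htne : t ≠ [] := by simp [ht]
      have hg : (a :: t).getLast? = some (t.getLast htne) := by
        rw [List.getLast?_eq_getLast (l := a :: t) (by simp), List.getLast_cons htne]
      rw [hg]
      simp only [ne_eq, Option.some.injEq]
      rintro rfl
      have hnt : t.Nodup := (List.nodup_cons.mp hn).2
      have := List.dropLast_append_getLast htne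
      have hdis : t.Nodup := hnt
      rw [← this] at hdis
      have := (List.nodup_append.mp hdis).2.2
      simp only [List.tail_cons] at h
      exact this _ h _ (by simp) rfl

lemma inner_decomp {l : List V} {x : V} (h : x ∈ l.tail.dropLast) :
    ∃ u a c t, l = u ++ a :: x :: c :: t := by
  induction l with
  | nil => simp at h
  | cons a t ih =>
    simp only [List.tail_cons] at h
    cases t with
    | nil => simp at h
    | cons b t' =>
      cases t' with
      | nil => simp at h
      | cons c t'' =>
        rw [List.dropLast_cons₂] at h
        rcases List.mem_cons.mp h with rfl | h'
        · exact ⟨[], a, c, t'', rfl⟩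
        · obtain ⟨u, a', c', t, heq⟩ := ih (by simpa using h')
          exact ⟨a :: u, a', c', t, by simp [heq]⟩


lemma mem_inner_decomp {u : List V} {a b c : V} {t : List V}
    (hn : (u ++ a :: b :: c :: t).Nodup) :
    b ∈ (u ++ a :: b :: c :: t).tail.dropLast := by
  apply mem_inner_of
  · simp
  · cases u with
    | nil =>
      simp only [List.nil_append, List.head?_cons, ne_eq, Option.some.injEq]
      rintro rfl
      simp at hn
    | cons h u' =>
      simp only [List.cons_append, List.head?_cons, ne_eq, Option.some.injEq]
      rintro rfl
      rw [List.cons_append, List.nodup_cons] at hn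
      exact hn.1 (by simp)
  · have h1 : (u ++ a :: b :: c :: t).getLast? = (c :: t).getLast? := by
      rw [List.getLast?_append]
      have : (a :: b :: c :: t).getLast? = (c :: t).getLast? := by
        rw [List.getLast?_cons_cons, List.getLast?_cons_cons]
      rw [this]
      cases h : (c :: t).getLast? with
      | none => simp at h
      | some g => simp
    rw [h1]
    have hct : (c :: t) ≠ [] := by simp
    rw [List.getLast?_eq_getLast hct]
    simp only [ne_eq, Option.some.injEq]
    intro heq
    have hbn : (b :: c :: t).Nodup := hn.sublist (by simp)
    have : b ∉ c :: t := (List.nodup_cons.mp hbn).1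
    exact this (heq ▸ List.getLast_mem hct)

/-- extract a duplicate-free walk -/
lemma dedup_walk {R : V → V → Prop} :
    ∀ n (q : List V), q.length ≤ n → q ≠ [] → List.Chain' R q →
    ∃ r : List V, r ≠ [] ∧ r.Nodup ∧ List.Chain' R r ∧ r.head? = q.head? ∧
      r.getLast? = q.getLast? ∧ ∀ x ∈ r, x ∈ q := by
  intro n
  induction n with
  | zero => intro q hq hne _; interval_cases h : q.length <;> simp_all
  | succ n ih =>
    intro q hq hne hch
    cases q with
    | nil => simp at hne
    | cons a t =>
      by_cases ha : a ∈ t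
      · obtain ⟨l₁, l₂, rfl⟩ := List.append_of_mem ha
        have hsuf : (a :: l₂) <:+ a :: l₁ ++ a :: l₂ := by
          refine ⟨a :: l₁, by simp⟩
        obtain ⟨r, hr1, hr2, hr3, hr4, hr5, hr6⟩ :=
          ih (a :: l₂) (by simp at hq ⊢; omega) (by simp) (hch.suffix hsuf)
        refine ⟨r, hr1, hr2, hr3, by simpa using hr4, ?_, ?_⟩
        · rw [hr5]
          rw [← List.cons_append, List.getLast?_append]
          cases h : (a :: l₂).getLast? with
          | none => simp at h
          | some g => simp
        · intro x hx
          have := hr6 x hx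
          simp at this ⊢
          tauto
      · cases t with
        | nil =>
          exact ⟨[a], by simp, by simp, List.isChain_singleton _, rfl, rfl, by simp⟩
        | cons b t' =>
          obtain ⟨r, hr1, hr2, hr3, hr4, hr5, hr6⟩ :=
            ih (b :: t') (by simp at hq ⊢; omega) (by simp) hch.tail
          cases r with
          | nil => simp at hr1
          | cons rh rt =>
            have hrhb : rh = b := by simpa using hr4
            subst hrhb
            refine ⟨a :: rh :: rt, by simp, ?_, ?_, by simp, ?_, ?_⟩
            · refine List.nodup_cons.mpr ⟨fun hmem => ha (hr6 a hmem), hr2⟩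
            · exact List.isChain_cons_cons.mpr ⟨(List.isChain_cons_cons.mp hch).1, hr3⟩
            · rw [List.getLast?_cons_cons, hr5, List.getLast?_cons_cons]
            · intro x hx
              rcases List.mem_cons.mp hx with rfl | h'
              · simp
              · simpa using Or.inr (hr6 x h')

end MagAux


namespace MixedGraph
open MagAux List
variable {V : Type*} {G : MixedGraph V} {C : Set V}

lemma adj_symm (h : G.adj i j) : G.adj j i := by
  rcases h with h | h | h | h
  · exact Or.inl (G.line_symm _ _ h)
  · exact Or.inr (Or.inr (Or.inl h))
  · exact Or.inr (Or.inl h)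
  · exact Or.inr (Or.inr (Or.inr (G.arc_symm _ _ h)))

lemma adj_ne (h : G.adj i j) : i ≠ j := by
  rintro rfl
  rcases h with h | h | h | h
  exacts [G.line_irrefl _ h, G.arrow_irrefl _ h, G.arrow_irrefl _ h, G.arc_irrefl _ h]

section DAG
variable (hG : G.isDAG)
include hG

lemma dag_adj : G.adj i j ↔ G.arrow i j ∨ G.arrow j i := by
  unfold adj
  have := hG.1 i j
  have := hG.2.1 i j
  tauto

lemma dag_headAt : G.headAt i j ↔ G.arrow i j := by
  unfold headAt
  have := hG.2.1 i j
  tauto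

lemma dag_collider : G.collider a b c ↔ G.arrow a b ∧ G.arrow c b := by
  unfold collider
  rw [dag_headAt hG, dag_headAt hG]

lemma no_two_cycle (h : G.arrow a b) : ¬ G.arrow b a := fun h' =>
  hG.2.2 a (Relation.TransGen.tail (Relation.TransGen.single h) h')

lemma arrow_ne (h : G.arrow a b) : a ≠ b := by
  rintro rfl; exact G.arrow_irrefl _ h

lemma anc_trans (h : G.anc a b) (h' : G.anc b c) : G.anc a c := h.trans h'

lemma arrow_anc (h : G.arrow a b) : G.anc a b := Relation.ReflTransGen.single h

lemma anc_of_arrow_anc (h : G.arrow a b) (h' : G.anc b a) : False :=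
  hG.2.2 a (Relation.TransGen.head' h h')

variable (hH : ¬ ∃ i j k, G.unshieldedNonCollision i j k)
include hH

lemma shield (hab : G.adj a b) (hbc : G.adj b c) (hne : a ≠ c) (hnadj : ¬ G.adj a c) :
    G.arrow a b ∧ G.arrow c b := by
  by_contra hcon
  exact hH ⟨a, b, c, hab, hbc, hne, hnadj, hcon⟩

omit hG in
lemma shield' (hab : G.adj a b) (hbc : G.adj b c) (hne : a ≠ c) (hnadj : ¬ G.adj a c) :
    G.arrow a b ∧ G.arrow c b := by
  by_contra hcon
  exact hH ⟨a, b, c, hab, hbc, hne, hnadj, hcon⟩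

lemma arrow_trans (h1 : G.arrow a b) (h2 : G.arrow b c) (hne : a ≠ c) : G.arrow a c := by
  by_cases hadj : G.adj a c
  · rcases (dag_adj hG).mp hadj with h | h
    · exact h
    · exact absurd (Relation.TransGen.tail (Relation.TransGen.tail (.single h1) h2) h)
        (hG.2.2 a)
  · have := shield hG hH (Or.inr (Or.inl h1)) (Or.inr (Or.inl h2)) hne hadj
    exact absurd this.2 (no_two_cycle hG h2)

lemma anc_to_arrow (h : G.anc a b) (hne : a ≠ b) : G.arrow a b := by
  induction h with
  | refl => exact absurd rfl hne
  | @tail c b h1 h2 ih =>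
    by_cases hac : a = c
    · subst hac; exact h2
    · exact arrow_trans hG hH (ih hac) h2 hne

end DAG

lemma innerOK_iff : ∀ (p : List V), G.innerOK C p ↔ ∀ a b c : V, [a, b, c] <:+: p →
    ((G.collider a b c → b ∈ C ∨ ∃ x ∈ C, G.anc b x) ∧ (¬ G.collider a b c → b ∉ C))
  | [] => by
    constructor
    · intro _ a b c h
      have := h.sublist.length_le; simp at this
    · intro _; trivial
  | [x] => by
    constructor
    · intro _ a b c h
      have := h.sublist.length_le; simp at this
    · intro _; trivial
  | [x, y] => by
    constructor
    · intro _ a b c h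
      have := h.sublist.length_le; simp at this
    · intro _; trivial
  | a :: b :: c :: r => by
    have hrec := innerOK_iff (b :: c :: r)
    constructor
    · rintro ⟨h1, h2⟩ x y z hinf
      rcases List.infix_cons_iff.mp hinf with hpre | hinf'
      · rw [List.cons_prefix_cons] at hpre
        obtain ⟨rfl, hpre⟩ := hpre
        rw [List.cons_prefix_cons] at hpre
        obtain ⟨rfl, hpre⟩ := hpre
        rw [List.cons_prefix_cons] at hpre
        obtain ⟨rfl, _⟩ := hpre
        exact h1
      · exact hrec.mp h2 x y z hinf'
    · intro h
      refine ⟨h a b c ⟨[], r, rfl⟩, hrec.mpr fun x y z hinf => h x y z (List.infix_cons hinf)⟩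

lemma innerOK_cons₃ {a b c : V} {r : List V} :
    G.innerOK C (a :: b :: c :: r) ↔
      ((G.collider a b c → b ∈ C ∨ ∃ x ∈ C, G.anc b x) ∧ (¬ G.collider a b c → b ∉ C)) ∧
        G.innerOK C (b :: c :: r) := Iff.rfl

lemma innerOK_of_infix {p l : List V} (h : G.innerOK C p) (hl : l <:+: p) :
    G.innerOK C l := by
  rw [innerOK_iff] at h ⊢
  exact fun a b c hinf => h a b c (hinf.trans hl)

lemma collider_comm : G.collider a b c ↔ G.collider c b a := And.comm

lemma innerOK_reverse {p : List V} (h : G.innerOK C p) : G.innerOK C p.reverse := by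
  rw [innerOK_iff] at h ⊢
  intro a b c hinf
  have : [c, b, a] <:+: p := by
    rw [← List.reverse_infix]
    simpa using hinf
  have h' := h c b a this
  rw [collider_comm]
  exact h'


lemma ne_head_of_mem_tail {p : List V} {x i : V} (hn : p.Nodup) (hx : x ∈ p.tail)
    (hh : p.head? = some i) : x ≠ i := by
  cases p with
  | nil => simp at hx
  | cons h tp =>
    simp only [List.head?_cons, Option.some.injEq] at hh
    subst hh
    rintro rfl
    exact (List.nodup_cons.mp hn).1 hx

lemma ne_last_of_mem_dropLast {p : List V} {x k : V} (hn : p.Nodup) (hx : x ∈ p.dropLast)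
    (hl : p.getLast? = some k) : x ≠ k := by
  have hne : p ≠ [] := by rintro rfl; simp at hx
  rw [List.getLast?_eq_getLast hne] at hl
  simp only [Option.some.injEq] at hl
  subst hl
  rintro rfl
  have := List.dropLast_append_getLast hne
  conv at hn => rw [← this]
  exact (List.nodup_append.mp hn).2.2 _ hx _ (by simp) rfl

section Sep
variable (hG : G.isDAG) {i k : V}
include hG

/-- every node with an outgoing edge along a connecting path is an ancestor of an endpoint -/
lemma reach : ∀ (t : List V) (b c : V),
    List.Chain' G.adj (b :: c :: t) →
    G.innerOK {v | v ≠ i ∧ v ≠ k ∧ (G.anc v i ∨ G.anc v k)} (b :: c :: t) →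
    ((b :: c :: t).getLast? = some i ∨ (b :: c :: t).getLast? = some k) →
    (∀ x ∈ (c :: t).dropLast, x ≠ i ∧ x ≠ k) →
    G.arrow b c → G.anc b i ∨ G.anc b k := by
  intro t
  induction t with
  | nil =>
    intro b c _ _ hlast _ hbc
    rcases hlast with h | h <;> simp only [List.getLast?_cons_cons, List.getLast?_singleton,
      Option.some.injEq] at h <;> subst h
    · exact Or.inl (arrow_anc hG hbc)
    · exact Or.inr (arrow_anc hG hbc)
  | cons d t' ih =>
    intro b c hch hOK hlast hmem hbc
    by_cases hdc : G.arrow d c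
    · have hcoll : G.collider b c d := (dag_collider hG).mpr ⟨hbc, hdc⟩
      have := (innerOK_cons₃.mp hOK).1.1 hcoll
      have hanc : G.anc c i ∨ G.anc c k := by
        rcases this with hC | ⟨x, hxC, hax⟩
        · exact hC.2.2
        · rcases hxC.2.2 with h | h
          · exact Or.inl (hax.trans h)
          · exact Or.inr (hax.trans h)
      rcases hanc with h | h
      · exact Or.inl ((arrow_anc hG hbc).trans h)
      · exact Or.inr ((arrow_anc hG hbc).trans h)
    · have hncoll : ¬ G.collider b c d := by
        rw [dag_collider hG]; tauto
      have hcnotC : c ∉ {v | v ≠ i ∧ v ≠ k ∧ (G.anc v i ∨ G.anc v k)} :=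
        (innerOK_cons₃.mp hOK).1.2 hncoll
      have hcd : G.arrow c d := by
        have : G.adj c d := (List.isChain_cons_cons.mp (List.isChain_cons_cons.mp hch).2).1
        rcases (dag_adj hG).mp this with h | h
        · exact h
        · exact absurd h hdc
      have hanc : G.anc c i ∨ G.anc c k := by
        refine ih c d (List.isChain_cons_cons.mp hch).2 (innerOK_cons₃.mp hOK).2
          (by simpa using hlast) (fun x hx => hmem x ?_) hcd
        rw [List.dropLast_cons₂]
        exact List.mem_cons_of_mem _ hx
      have hcmem : c ∈ (c :: d :: t').dropLast := by
        rw [List.dropLast_cons₂]; exact List.mem_cons_self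
      exact absurd ⟨(hmem c hcmem).1, (hmem c hcmem).2, hanc⟩ hcnotC


lemma sep_anc (hnadj : ¬ G.adj i k) (hne : i ≠ k) :
    G.mSep {i} {k} {v | v ≠ i ∧ v ≠ k ∧ (G.anc v i ∨ G.anc v k)} := by
  rintro ⟨i', k', p, hi', hk', hconn⟩
  rw [Set.mem_singleton_iff] at hi' hk'
  rw [hi', hk'] at hconn
  clear hi' hk'
  obtain ⟨⟨hnodup, hchain⟩, hlen, hhead, hlast, hinner⟩ := hconn
  have hcol : ∀ u (a b c : V) t, p = u ++ a :: b :: c :: t → G.arrow a b ∧ G.arrow c b := by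
    intro u a b c t hput
    have hinf : [a, b, c] <:+: p := ⟨u, t, by simp [hput]⟩
    have hchain3 : List.Chain' G.adj [a, b, c] := hchain.infix hinf
    have hab : G.adj a b := (List.isChain_cons_cons.mp hchain3).1
    have hbc : G.adj b c := (List.isChain_cons_cons.mp (List.isChain_cons_cons.mp hchain3).2).1
    by_contra hnc
    have hncoll : ¬ G.collider a b c := by rw [dag_collider hG]; exact hnc
    have hbnotC : b ∉ {v | v ≠ i ∧ v ≠ k ∧ (G.anc v i ∨ G.anc v k)} :=
      ((innerOK_iff p).mp hinner a b c hinf).2 hncoll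
    have hbinner : b ∈ p.tail.dropLast := by
      rw [hput]; exact MagAux.mem_inner_decomp (hput ▸ hnodup)
    have hbi : b ≠ i :=
      ne_head_of_mem_tail hnodup (List.dropLast_subset _ hbinner) hhead
    have hbk : b ≠ k := by
      refine ne_last_of_mem_dropLast hnodup ?_ hlast
      rw [MagAux.tail_dropLast] at hbinner
      exact List.tail_subset _ hbinner
    have hput2 : p = (u ++ [a]) ++ b :: c :: t := by simp [hput]
    have hput3 : p = (u ++ [a, b]) ++ c :: t := by simp [hput]
    have hor : G.arrow b a ∨ G.arrow b c := by
      rcases (dag_adj hG).mp hab with h | h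
      · rcases (dag_adj hG).mp hbc with h' | h'
        · exact Or.inr h'
        · exact absurd ⟨h, h'⟩ hnc
      · exact Or.inl h
    have hanc : G.anc b i ∨ G.anc b k := by
      rcases hor with hba | hbc'
      · -- reversed prefix b :: a :: u.reverse
        have hrev : (u ++ [a, b]).reverse = b :: a :: u.reverse := by simp
        refine reach hG u.reverse b a ?_ ?_ ?_ ?_ hba
        · rw [← hrev]; unfold List.Chain'; rw [List.isChain_reverse]
          exact (hchain.infix (show (u ++ [a, b]) <:+: p from ⟨[], c :: t, by simp [hput]⟩)).imp
            fun x y h => adj_symm h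
        · rw [← hrev]
          exact innerOK_reverse (innerOK_of_infix hinner
            (show (u ++ [a, b]) <:+: p from ⟨[], c :: t, by simp [hput]⟩))
        · left
          rw [← hrev, List.getLast?_reverse]
          rw [hput3, List.head?_append_of_ne_nil _ (by simp)] at hhead
          exact hhead
        · intro x hx
          have hx' : x ∈ (u ++ [a]).tail := by
            have heq : (a :: u.reverse) = (u ++ [a]).reverse := by simp
            rw [heq, List.dropLast_reverse] at hx
            exact (List.mem_reverse).mp hx
          constructor
          · refine ne_head_of_mem_tail hnodup ?_ hhead
            rw [hput2, List.tail_append_of_ne_nil (by simp)]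
            exact List.mem_append_left _ hx'
          · refine ne_last_of_mem_dropLast hnodup ?_ hlast
            rw [hput2, List.dropLast_append_of_ne_nil (l := b :: c :: t) (by simp)]
            exact List.mem_append_left _ (List.tail_subset _ hx')
      · -- suffix b :: c :: t
        refine reach hG t b c (hchain.suffix ⟨u ++ [a], hput2.symm⟩)
          (innerOK_of_infix hinner
            (show (b :: c :: t) <:+: p from ⟨u ++ [a], [], by simp [hput]⟩)) ?_ ?_ hbc'
        · right
          have h1 : p.getLast? = (b :: c :: t).getLast? := by
            rw [hput2, List.getLast?_append]
            cases h : (b :: c :: t).getLast? with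
            | none => simp at h
            | some g => simp
          rw [← h1]; exact hlast
        · intro x hx
          constructor
          · refine ne_head_of_mem_tail hnodup ?_ hhead
            rw [hput3, List.tail_append_of_ne_nil (by simp)]
            exact List.mem_append_right _ (List.dropLast_subset _ hx)
          · refine ne_last_of_mem_dropLast hnodup ?_ hlast
            rw [hput3, List.dropLast_append_of_ne_nil (l := c :: t) (by simp)]
            exact List.mem_append_right _ hx
    exact hbnotC ⟨hbi, hbk, hanc⟩
  -- now the contradiction
  cases p with
  | nil => simp at hlen
  | cons x q =>
    cases q with
    | nil => simp at hlen
    | cons y q' =>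
      have hx : i = x := by simpa using hhead.symm
      subst hx
      cases q' with
      | nil =>
        have hy : k = y := by simpa using hlast.symm
        subst hy
        exact hnadj (List.isChain_pair.mp hchain)
      | cons z q'' =>
        obtain ⟨hxy, hzy⟩ := hcol [] i y z q'' rfl
        cases q'' with
        | nil =>
          have hz : k = z := by simpa using hlast.symm
          subst hz
          have hcoll : G.collider i y k := (dag_collider hG).mpr ⟨hxy, hzy⟩
          have := (innerOK_cons₃.mp hinner).1.1 hcoll
          have hanc : G.anc y i ∨ G.anc y k := by
            rcases this with hC | ⟨w, hwC, hw⟩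
            · exact hC.2.2
            · rcases hwC.2.2 with h | h
              · exact Or.inl (hw.trans h)
              · exact Or.inr (hw.trans h)
          rcases hanc with h | h
          · exact anc_of_arrow_anc hG hxy h
          · exact anc_of_arrow_anc hG hzy h
        | cons w q₃ =>
          obtain ⟨hyz, _⟩ := hcol [i] y z w q₃ rfl
          exact no_two_cycle hG hyz hzy

end Sep

section Helpers

lemma getLast?_cons_ne_nil {q : List V} (hq : q ≠ []) (a : V) :
    (a :: q).getLast? = q.getLast? := by
  cases q with
  | nil => exact absurd rfl hq
  | cons b t => exact List.getLast?_cons_cons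

lemma cons_walk_inner {q : List V} {x h : V} (hq : q.head? = some h)
    (hx : x ∈ q.dropLast) : x = h ∨ x ∈ q.tail.dropLast := by
  cases q with
  | nil => simp at hq
  | cons qh qt =>
    simp only [List.head?_cons, Option.some.injEq] at hq
    subst hq
    cases qt with
    | nil => simp at hx
    | cons a t =>
      rw [List.dropLast_cons₂] at hx
      rcases List.mem_cons.mp hx with rfl | hx'
      · exact Or.inl rfl
      · exact Or.inr hx'

lemma chain'_cons_of_head {R : V → V → Prop} {q : List V} {a h : V}
    (hq : q.head? = some h) (hah : R a h) (hch : List.Chain' R q) :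
    List.Chain' R (a :: q) := by
  refine List.isChain_cons.mpr ⟨?_, hch⟩
  intro y hy
  rw [hq] at hy
  simp at hy
  subst hy
  exact hah

end Helpers

section Skel
variable (hG : G.isDAG) (hH : ¬ ∃ i j k, G.unshieldedNonCollision i j k)
include hG hH

lemma arrow_adj {a b : V} (h : G.arrow a b) : G.adj a b := Or.inr (Or.inl h)
lemma arrow_adj' {a b : V} (h : G.arrow b a) : G.adj a b := Or.inr (Or.inr (Or.inl h))

lemma toSkel : ∀ (n : ℕ) (p : List V) (i k : V), p.length ≤ n → p ≠ [] →
    List.Chain' G.adj p → G.innerOK C p → p.head? = some i → p.getLast? = some k →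
    ∃ q : List V, q ≠ [] ∧ List.Chain' G.adj q ∧ q.head? = some i ∧ q.getLast? = some k ∧
      ∀ x ∈ q.tail.dropLast, x ∈ C := by
  intro n
  induction n with
  | zero =>
    intro p i k hlen hne
    rw [Nat.le_zero, List.length_eq_zero_iff] at hlen
    exact absurd hlen hne
  | succ n ih =>
    rintro p i k hlen hne hchain hinner hhead hlast
    match p, hne with
    | [x], _ =>
      have h1 : i = x := by simpa using hhead.symm
      have h2 : k = x := by simpa using hlast.symm
      exact ⟨[x], by simp, List.isChain_singleton _, by simp [h1], by simp [h2], by simp⟩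
    | [x, y], _ =>
      exact ⟨[x, y], by simp, hchain, hhead, hlast, by simp⟩
    | x :: v1 :: v2 :: rest, _ =>
      have hix : i = x := by simpa using hhead.symm
      subst hix
      have hiv1 : G.adj i v1 := (List.isChain_cons_cons.mp hchain).1
      have hchT : List.Chain' G.adj (v1 :: v2 :: rest) := (List.isChain_cons_cons.mp hchain).2
      have hv1v2 : G.adj v1 v2 := (List.isChain_cons_cons.mp hchT).1
      have hchT2 : List.Chain' G.adj (v2 :: rest) := (List.isChain_cons_cons.mp hchT).2
      have hinnerT : G.innerOK C (v1 :: v2 :: rest) := (innerOK_cons₃.mp hinner).2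
      have hOK1 := (innerOK_cons₃.mp hinner).1
      have hlastT : (v1 :: v2 :: rest).getLast? = some k := by
        rwa [List.getLast?_cons_cons] at hlast
      have hlastT2 : (v2 :: rest).getLast? = some k := by
        rwa [List.getLast?_cons_cons] at hlastT
      have hlenT : (v1 :: v2 :: rest).length ≤ n := by simp at hlen ⊢; omega
      by_cases hv1C : v1 ∈ C
      · -- recurse on suffix from v1
        obtain ⟨q, hq1, hq2, hq3, hq4, hq5⟩ :=
          ih (v1 :: v2 :: rest) v1 k hlenT (by simp) hchT hinnerT rfl hlastT
        refine ⟨i :: q, by simp, chain'_cons_of_head hq3 hiv1 hq2, rfl,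
          by rw [getLast?_cons_ne_nil hq1, hq4], ?_⟩
        intro y hy
        simp only [List.tail_cons] at hy
        rcases cons_walk_inner hq3 hy with rfl | hy'
        · exact hv1C
        · exact hq5 y hy'
      · by_cases hcol : G.arrow i v1 ∧ G.arrow v2 v1
        · -- v1 is a collider not in C: replace by a strict descendant in C
          have := hOK1.1 ((dag_collider hG).mpr hcol)
          rcases this with h | ⟨x', hx'C, hancx⟩
          · exact absurd h hv1C
          have hne1 : v1 ≠ x' := by rintro rfl; exact hv1C hx'C
          have hv1x : G.arrow v1 x' := anc_to_arrow hG hH hancx hne1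
          have hix' : i ≠ x' := by
            rintro rfl; exact no_two_cycle hG hcol.1 hv1x
          have harr_ix : G.arrow i x' := arrow_trans hG hH hcol.1 hv1x hix'
          have hv2x' : v2 ≠ x' := by
            rintro rfl; exact no_two_cycle hG hcol.2 hv1x
          have harr_v2x : G.arrow v2 x' := arrow_trans hG hH hcol.2 hv1x hv2x'
          have hq0inner : G.innerOK C (x' :: v2 :: rest) := by
            cases rest with
            | nil => trivial
            | cons v3 rest' =>
              have hOK2 := (innerOK_cons₃.mp hinnerT).1
              have hv2notC : v2 ∉ C := by
                refine hOK2.2 ?_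
                rw [dag_collider hG]
                rintro ⟨h1, _⟩
                exact no_two_cycle hG hcol.2 h1
              refine innerOK_cons₃.mpr ⟨⟨fun hc => ?_, fun _ => hv2notC⟩,
                (innerOK_cons₃.mp hinnerT).2⟩
              exact absurd ((dag_collider hG).mp hc).1 (no_two_cycle hG harr_v2x)
          obtain ⟨q, hq1, hq2, hq3, hq4, hq5⟩ :=
            ih (x' :: v2 :: rest) x' k (by simp at hlen ⊢; omega) (by simp)
              (List.isChain_cons_cons.mpr ⟨arrow_adj' hG hH harr_v2x, hchT2⟩) hq0inner rfl
              (by rwa [List.getLast?_cons_cons])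
          refine ⟨i :: q, by simp, chain'_cons_of_head hq3 (arrow_adj hG hH harr_ix) hq2, rfl,
            by rw [getLast?_cons_ne_nil hq1, hq4], ?_⟩
          intro y hy
          simp only [List.tail_cons] at hy
          rcases cons_walk_inner hq3 hy with rfl | hy'
          · exact hx'C
          · exact hq5 y hy'
        · -- v1 is a non-collider
          by_cases hiv2 : i = v2
          · -- degenerate walk: recurse from v2
            subst hiv2
            exact ih (i :: rest) i k (by simp at hlen ⊢; omega) (by simp) hchT2
              (innerOK_of_infix hinnerT ⟨[v1], [], by simp⟩) rfl hlastT2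
          · have hadj_iv2 : G.adj i v2 := by
              by_contra hno
              exact hcol (shield' hH hiv1 hv1v2 hiv2 hno)
            cases rest with
            | nil =>
              -- v2 = k
              have hk : k = v2 := by simpa using hlastT2.symm
              subst hk
              exact ⟨[i, k], by simp, List.isChain_pair.mpr hadj_iv2, rfl, rfl, by simp⟩
            | cons v3 rest' =>
              have hOK2 := (innerOK_cons₃.mp hinnerT).1
              have hchT3 : List.Chain' G.adj (v3 :: rest') := (List.isChain_cons_cons.mp hchT2).2
              have hlastT3 : (v3 :: rest').getLast? = some k := by
                rwa [List.getLast?_cons_cons] at hlastT2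
              by_cases hv2C : v2 ∈ C
              · obtain ⟨q, hq1, hq2, hq3, hq4, hq5⟩ :=
                  ih (v2 :: v3 :: rest') v2 k (by simp at hlen ⊢; omega) (by simp) hchT2
                    ((innerOK_cons₃.mp hinnerT).2) rfl hlastT2
                refine ⟨i :: q, by simp, chain'_cons_of_head hq3 hadj_iv2 hq2, rfl,
                  by rw [getLast?_cons_ne_nil hq1, hq4], ?_⟩
                intro y hy
                simp only [List.tail_cons] at hy
                rcases cons_walk_inner hq3 hy with rfl | hy'
                · exact hv2C
                · exact hq5 y hy'
              · by_cases hcol2 : G.arrow v1 v2 ∧ G.arrow v3 v2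
                · -- v2 collider not in C: replace by descendant x' in C
                  have := hOK2.1 ((dag_collider hG).mpr hcol2)
                  rcases this with h | ⟨x', hx'C, hancx⟩
                  · exact absurd h hv2C
                  have hne2 : v2 ≠ x' := by rintro rfl; exact hv2C hx'C
                  have hv2x : G.arrow v2 x' := anc_to_arrow hG hH hancx hne2
                  have hv1x' : v1 ≠ x' := by
                    rintro rfl; exact no_two_cycle hG hcol2.1 hv2x
                  have harr_v1x : G.arrow v1 x' := arrow_trans hG hH hcol2.1 hv2x hv1x'
                  have hv3x' : v3 ≠ x' := by
                    rintro rfl; exact no_two_cycle hG hcol2.2 hv2x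
                  have harr_v3x : G.arrow v3 x' := arrow_trans hG hH hcol2.2 hv2x hv3x'
                  have hq0inner : G.innerOK C (x' :: v3 :: rest') := by
                    cases rest' with
                    | nil => trivial
                    | cons v4 rest'' =>
                      have hOK3 := (innerOK_cons₃.mp (innerOK_cons₃.mp hinnerT).2).1
                      have hv3notC : v3 ∉ C := by
                        refine hOK3.2 ?_
                        rw [dag_collider hG]
                        rintro ⟨h1, _⟩
                        exact no_two_cycle hG hcol2.2 h1
                      refine innerOK_cons₃.mpr ⟨⟨fun hc => ?_, fun _ => hv3notC⟩,
                        (innerOK_cons₃.mp (innerOK_cons₃.mp hinnerT).2).2⟩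
                      exact absurd ((dag_collider hG).mp hc).1 (no_two_cycle hG harr_v3x)
                  obtain ⟨q, hq1, hq2, hq3, hq4, hq5⟩ :=
                    ih (x' :: v3 :: rest') x' k (by simp at hlen ⊢; omega) (by simp)
                      (List.isChain_cons_cons.mpr ⟨arrow_adj' hG hH harr_v3x, hchT3⟩) hq0inner rfl
                      (by rwa [List.getLast?_cons_cons])
                  by_cases hix' : i = x'
                  · subst hix'
                    exact ⟨q, hq1, hq2, hq3, hq4, hq5⟩
                  · have hadj_ix : G.adj i x' := by
                      by_contra hno
                      have := shield' hH hiv1 (arrow_adj hG hH harr_v1x) hix' hno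
                      exact no_two_cycle hG harr_v1x this.2
                    refine ⟨i :: q, by simp, chain'_cons_of_head hq3 hadj_ix hq2, rfl,
                      by rw [getLast?_cons_ne_nil hq1, hq4], ?_⟩
                    intro y hy
                    simp only [List.tail_cons] at hy
                    rcases cons_walk_inner hq3 hy with rfl | hy'
                    · exact hx'C
                    · exact hq5 y hy'
                · -- v2 non-collider: shortcut v1
                  have hnotc : ¬ (G.arrow i v2 ∧ G.arrow v3 v2) := by
                    rintro ⟨h1, h2⟩
                    have hnv1v2 : ¬ G.arrow v1 v2 := fun h => hcol2 ⟨h, h2⟩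
                    have hv2v1 : G.arrow v2 v1 := by
                      rcases (dag_adj hG).mp hv1v2 with h | h
                      · exact absurd h hnv1v2
                      · exact h
                    have hiv1' : G.arrow i v1 :=
                      arrow_trans hG hH h1 hv2v1 (adj_ne hiv1)
                    exact hcol ⟨hiv1', hv2v1⟩
                  have hq0inner : G.innerOK C (i :: v2 :: v3 :: rest') := by
                    refine innerOK_cons₃.mpr ⟨⟨fun hc => ?_, fun _ => hv2C⟩,
                      (innerOK_cons₃.mp hinnerT).2⟩
                    exact absurd ((dag_collider hG).mp hc) hnotc
                  exact ih (i :: v2 :: v3 :: rest') i k (by simp at hlen ⊢; omega) (by simp)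
                    (List.isChain_cons_cons.mpr ⟨hadj_iv2, hchT2⟩) hq0inner rfl
                    (by rwa [List.getLast?_cons_cons])

end Skel

section ToDag
variable (hG : G.isDAG) (hH : ¬ ∃ i j k, G.unshieldedNonCollision i j k)
include hG hH

lemma toDag : ∀ (n : ℕ) (p : List V) (i k : V), p.length ≤ n → 2 ≤ p.length →
    p.Nodup → List.Chain' G.adj p → (∀ x ∈ p.tail.dropLast, x ∈ C) →
    p.head? = some i → p.getLast? = some k →
    ∃ q : List V, G.mConnecting C i k q := by
  intro n
  induction n with
  | zero =>
    intro p i k hlen hlen2 _ _ _ _ _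
    omega
  | succ n ih =>
    intro p i k hlen hlen2 hnodup hchain hinC hhead hlast
    by_cases hsh : ∃ u : List V, ∃ a b c : V, ∃ t : List V, p = u ++ a :: b :: c :: t ∧ G.adj a c
    · obtain ⟨u, a, b, c, t, hput, hac⟩ := hsh
      set q0 : List V := u ++ a :: c :: t with hq0
      have hsub : q0.Sublist p := by
        rw [hput, hq0]
        exact List.Sublist.append_left
          (List.Sublist.cons₂ a (List.sublist_cons_self b (c :: t))) u
      have hnodup0 : q0.Nodup := hnodup.sublist hsub
      have hchain0 : List.Chain' G.adj q0 := by
        rw [hput] at hchain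
        rw [hq0]
        unfold List.Chain' at hchain ⊢; rw [List.isChain_append] at hchain ⊢
        refine ⟨hchain.1, ?_, by simpa using hchain.2.2⟩
        refine List.isChain_cons_cons.mpr ⟨hac, ?_⟩
        exact (List.isChain_cons_cons.mp (List.isChain_cons_cons.mp hchain.2.1).2).2
      have hhead0 : q0.head? = some i := by
        rw [hput] at hhead
        rw [hq0]
        cases u with
        | nil => simpa using hhead
        | cons h u' => simpa using hhead
      have hlast0 : q0.getLast? = some k := by
        have h1 : p.getLast? = (c :: t).getLast? := by
          rw [hput, show (u ++ a :: b :: c :: t) = (u ++ [a, b]) ++ (c :: t) by simp,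
            List.getLast?_append]
          cases h : (c :: t).getLast? with
          | none => simp at h
          | some g => simp
        have h2 : q0.getLast? = (c :: t).getLast? := by
          rw [hq0, show (u ++ a :: c :: t) = (u ++ [a]) ++ (c :: t) by simp,
            List.getLast?_append]
          cases h : (c :: t).getLast? with
          | none => simp at h
          | some g => simp
        rw [h2, ← h1, hlast]
      have hinC0 : ∀ x ∈ q0.tail.dropLast, x ∈ C := by
        intro x hx
        have hxq : x ∈ q0 := MagAux.inner_subset hx
        have hxp : x ∈ p := hsub.subset hxq
        have h1 : p.head? ≠ some x := by
          rw [hhead]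
          have := MagAux.not_head_of_inner hnodup0 hx
          rw [hhead0] at this
          simpa using this
        have h2 : p.getLast? ≠ some x := by
          rw [hlast]
          have := MagAux.not_last_of_inner hnodup0 hx
          rw [hlast0] at this
          simpa using this
        exact hinC x (MagAux.mem_inner_of hxp h1 h2)
      refine ih q0 i k ?_ ?_ hnodup0 hchain0 hinC0 hhead0 hlast0
      · have : p.length = q0.length + 1 := by rw [hput, hq0]; simp; omega
        omega
      · rw [hq0]; simp; omega
    · refine ⟨p, ⟨hnodup, hchain⟩, hlen2, hhead, hlast, ?_⟩
      rw [innerOK_iff]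
      intro a b c hinf
      obtain ⟨u, t, heq⟩ := id hinf
      have hput : p = u ++ a :: b :: c :: t := by rw [← heq]; simp
      have hnadj : ¬ G.adj a c := fun h => hsh ⟨u, a, b, c, t, hput, h⟩
      have htriple : [a, b, c].Nodup := hnodup.sublist hinf.sublist
      have hanec : a ≠ c := by simp at htriple; tauto
      have hch3 : List.Chain' G.adj [a, b, c] := hchain.infix hinf
      have hab : G.adj a b := (List.isChain_cons_cons.mp hch3).1
      have hbc : G.adj b c := (List.isChain_cons_cons.mp (List.isChain_cons_cons.mp hch3).2).1
      have hcoll := shield' hH hab hbc hanec hnadj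
      have hbC : b ∈ C := hinC b (by rw [hput]; exact MagAux.mem_inner_decomp (hput ▸ hnodup))
      refine ⟨fun _ => Or.inl hbC, fun hnc => ?_⟩
      exact absurd ((dag_collider hG).mpr hcoll) hnc

end ToDag

/-- the bidirected graph with the same skeleton -/
def bg (G : MixedGraph V) : MixedGraph V where
  line _ _ := False
  arrow _ _ := False
  arc i j := G.adj i j
  line_symm := by simp
  arc_symm := fun i j h => adj_symm h
  line_irrefl := by simp
  arrow_irrefl := by simp
  arc_irrefl := fun i h => adj_ne h rfl

lemma bg_isBG (G : MixedGraph V) : (bg G).isBG := ⟨fun _ _ => id, fun _ _ => id⟩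

lemma bg_adj {i j : V} : (bg G).adj i j ↔ G.adj i j := by
  show False ∨ False ∨ False ∨ G.adj i j ↔ G.adj i j
  simp

lemma bg_headAt {i j : V} : (bg G).headAt i j ↔ G.adj i j := by
  show False ∨ G.adj i j ↔ G.adj i j
  simp

lemma bg_anc {i j : V} : (bg G).anc i j ↔ i = j := by
  unfold anc
  rw [Relation.reflTransGen_iff_eq (fun b h => h)]
  exact eq_comm

lemma isBG_adj_arc {B : MixedGraph V} (hB : B.isBG) {a b : V} (h : B.adj a b) :
    B.arc a b := by
  rcases h with h | h | h | h
  · exact absurd h (hB.2 a b)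
  · exact absurd h (hB.1 a b)
  · exact absurd h (hB.1 b a)
  · exact h

lemma isBG_empty_conn {B : MixedGraph V} (hB : B.isBG) {i k : V} {p : List V}
    (h : B.mConnecting ∅ i k p) : B.arc i k := by
  obtain ⟨⟨hnodup, hchain⟩, hlen, hhead, hlast, hinner⟩ := h
  cases p with
  | nil => simp at hlen
  | cons a q =>
    cases q with
    | nil => simp at hlen
    | cons b q' =>
      cases q' with
      | nil =>
        have h1 : i = a := by simpa using hhead.symm
        have h2 : k = b := by simpa using hlast.symm
        subst h1; subst h2
        exact isBG_adj_arc hB (List.isChain_pair.mp hchain)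
      | cons c q'' =>
        have hab : B.adj a b := (List.isChain_cons_cons.mp hchain).1
        have hbc : B.adj b c := (List.isChain_cons_cons.mp (List.isChain_cons_cons.mp hchain).2).1
        have hcoll : B.collider a b c :=
          ⟨Or.inr (isBG_adj_arc hB hab), Or.inr (B.arc_symm _ _ (isBG_adj_arc hB hbc))⟩
        rcases (innerOK_cons₃.mp hinner).1.1 hcoll with h | ⟨x, hx, _⟩
        · exact absurd h (Set.notMem_empty b)
        · exact absurd hx (Set.notMem_empty x)

lemma no_unc (hG : G.isDAG) {B : MixedGraph V} (hB : B.isBG) (hEq : G.markovEquiv B) :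
    ¬ ∃ i j k, G.unshieldedNonCollision i j k := by
  rintro ⟨i, j, k, hij, hjk, hik, hnadj, hnc⟩
  have hij' : i ≠ j := adj_ne hij
  have hjk' : j ≠ k := adj_ne hjk
  have hd1 : Disjoint ({i} : Set V) {k} := by simp [hik]
  -- Step 1 : i and k must be joined by an arc in B
  have hGn : ¬ G.mSep {i} {k} ∅ := by
    intro hsep
    refine hsep ⟨i, k, [i, j, k], Set.mem_singleton _, Set.mem_singleton _,
      ⟨⟨by simp [hij', hjk', hik], ?_⟩, by simp, rfl, by simp, ?_⟩⟩
    · exact List.isChain_cons_cons.mpr ⟨hij, List.isChain_pair.mpr hjk⟩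
    · refine innerOK_cons₃.mpr ⟨⟨fun hc => absurd ((dag_collider hG).mp hc) hnc,
        fun _ => by simp⟩, trivial⟩
  have hBn : ¬ B.mSep {i} {k} ∅ :=
    fun h => hGn ((hEq {i} {k} ∅ hd1 (by simp) (by simp)).mpr h)
  obtain ⟨i', k', p, hi', hk', hconn⟩ := not_not.mp hBn
  rw [Set.mem_singleton_iff] at hi' hk'
  subst hi'; subst hk'
  have harc : B.arc i' k' := isBG_empty_conn hB hconn
  -- Step 2 : but i and k can be m-separated in G
  have hsep := sep_anc hG hnadj hik
  have hdAC : Disjoint ({i'} : Set V)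
      {v | v ≠ i' ∧ v ≠ k' ∧ (G.anc v i' ∨ G.anc v k')} := by
    rw [Set.disjoint_left]
    rintro x hx ⟨h1, _, _⟩
    rw [Set.mem_singleton_iff] at hx
    exact h1 hx
  have hdBC : Disjoint ({k'} : Set V)
      {v | v ≠ i' ∧ v ≠ k' ∧ (G.anc v i' ∨ G.anc v k')} := by
    rw [Set.disjoint_left]
    rintro x hx ⟨_, h2, _⟩
    rw [Set.mem_singleton_iff] at hx
    exact h2 hx
  have hBsep : B.mSep {i'} {k'} _ := (hEq _ _ _ hd1 hdAC hdBC).mp hsep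
  refine hBsep ⟨i', k', [i', k'], Set.mem_singleton _, Set.mem_singleton _,
    ⟨⟨by simp [hik], List.isChain_pair.mpr (Or.inr (Or.inr (Or.inr harc)))⟩,
      by simp, rfl, by simp, trivial⟩⟩

section Equiv
variable (hG : G.isDAG) (hH : ¬ ∃ i j k, G.unshieldedNonCollision i j k)
include hG hH

lemma equiv_bg : G.markovEquiv (bg G) := by
  intro A B' C hAB hAC hBC
  unfold mSep
  apply not_congr
  constructor
  · rintro ⟨i, j, p, hi, hj, hconn⟩
    have hij : i ≠ j := hAB.ne_of_mem hi hj
    obtain ⟨⟨hnodup, hchain⟩, hlen, hhead, hlast, hinner⟩ := hconn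
    obtain ⟨q, hq1, hq2, hq3, hq4, hq5⟩ :=
      toSkel hG hH p.length p i j le_rfl (by rintro rfl; simp at hlen) hchain hinner
        hhead hlast
    obtain ⟨r, hr1, hr2, hr3, hr4, hr5, hr6⟩ :=
      MagAux.dedup_walk q.length q le_rfl hq1 hq2
    have hrh : r.head? = some i := by rw [hr4, hq3]
    have hrl : r.getLast? = some j := by rw [hr5, hq4]
    have hinnerr : ∀ x ∈ r.tail.dropLast, x ∈ C := by
      intro x hx
      have hxq : x ∈ q := hr6 x (MagAux.inner_subset hx)
      have h1 : q.head? ≠ some x := by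
        rw [hq3]
        intro hc
        exact (MagAux.not_head_of_inner hr2 hx) (hrh.trans hc)
      have h2 : q.getLast? ≠ some x := by
        rw [hq4]
        intro hc
        exact (MagAux.not_last_of_inner hr2 hx) (hrl.trans hc)
      exact hq5 x (MagAux.mem_inner_of hxq h1 h2)
    have hrlen : 2 ≤ r.length := by
      cases r with
      | nil => simp at hr1
      | cons a t =>
        cases t with
        | nil =>
          exfalso
          apply hij
          have h1 : i = a := by simpa using hrh.symm
          have h2 : j = a := by simpa using hrl.symm
          rw [h1, h2]
        | cons b t' => simp
    refine ⟨i, j, r, hi, hj, ⟨hr2, hr3.imp fun x y h => bg_adj.mpr h⟩, hrlen, hrh, hrl, ?_⟩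
    rw [innerOK_iff]
    intro a b c hinf
    obtain ⟨u, t, heq⟩ := id hinf
    have hput : r = u ++ a :: b :: c :: t := by rw [← heq]; simp
    have hbC : b ∈ C :=
      hinnerr b (by rw [hput]; exact MagAux.mem_inner_decomp (hput ▸ hr2))
    have hch3 : List.Chain' G.adj [a, b, c] := hr3.infix hinf
    have hab : G.adj a b := (List.isChain_cons_cons.mp hch3).1
    have hbc : G.adj b c := (List.isChain_cons_cons.mp (List.isChain_cons_cons.mp hch3).2).1
    have hcoll : (bg G).collider a b c :=
      ⟨bg_headAt.mpr hab, bg_headAt.mpr (adj_symm hbc)⟩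
    exact ⟨fun _ => Or.inl hbC, fun hnc => absurd hcoll hnc⟩
  · rintro ⟨i, j, p, hi, hj, hconn⟩
    obtain ⟨⟨hnodup, hchain⟩, hlen, hhead, hlast, hinner⟩ := hconn
    have hchainG : List.Chain' G.adj p := hchain.imp fun x y h => bg_adj.mp h
    have hinC : ∀ x ∈ p.tail.dropLast, x ∈ C := by
      intro x hx
      obtain ⟨u, a, c, t, hput⟩ := MagAux.inner_decomp hx
      have hinf : [a, x, c] <:+: p := ⟨u, t, by rw [hput]; simp⟩
      have hch3 : List.Chain' (bg G).adj [a, x, c] := hchain.infix hinf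
      have hax : (bg G).adj a x := (List.isChain_cons_cons.mp hch3).1
      have hxc : (bg G).adj x c := (List.isChain_cons_cons.mp (List.isChain_cons_cons.mp hch3).2).1
      have hcoll : (bg G).collider a x c :=
        ⟨bg_headAt.mpr (bg_adj.mp hax), bg_headAt.mpr (adj_symm (bg_adj.mp hxc))⟩
      rcases ((innerOK_iff p).mp hinner a x c hinf).1 hcoll with h | ⟨y, hyC, hxy⟩
      · exact h
      · rw [bg_anc] at hxy
        exact hxy ▸ hyC
    obtain ⟨q, hq⟩ := toDag hG hH p.length p i j le_rfl hlen hnodup hchainG hinC hhead hlast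
    exact ⟨i, j, q, hi, hj, hq⟩

end Equiv
end MixedGraph

/-- A DAG is Markov equivalent to some bidirected graph iff it contains no
unshielded non-collision V-configuration. -/
theorem dag_equiv_some_bg_iff {V : Type*} [Fintype V] (G : MixedGraph V)
    (hG : G.isDAG) :
    (∃ B : MixedGraph V, B.isBG ∧ G.markovEquiv B) ↔
      ¬ ∃ i j k, G.unshieldedNonCollision i j k := by
  constructor
  · rintro ⟨B, hB, hEq⟩
    exact MixedGraph.no_unc hG hB hEq
  · intro hH
    exact ⟨MixedGraph.bg G, MixedGraph.bg_isBG G, MixedGraph.equiv_bg hG hH⟩
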